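/- arXiv:2004.09743 — 2 statements merged into one kernel-verified Lean document; each statement's English description precedes it below -/
import Mathlib

section
/- For any matrix X ∈ ℂ^{m×n} of rank at most r, the nuclear norm satisfies ‖X‖_* = min { (1/2)(‖L‖_F² + ‖R‖_F²) : L ∈ ℂ^{m×r}, R ∈ ℂ^{n×r}, X = L·Rᴴ }. -/
open Matrix
open scoped ComplexOrder

/-- Nuclear norm: sum of singular values (square roots of eigenvalues of `Xᴴ * X`). -/
noncomputable def nuclearNorm {m n : ℕ} (X : Matrix (Fin m) (Fin n) ℂ) : ℝ :=
  ∑ i, Real.sqrt ((Matrix.isHermitian_conjTranspose_mul_self X).eigenvalues i)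

/-- Operator (spectral) norm of a matrix, via the induced Euclidean operator norm. -/
noncomputable def opNorm {m n : ℕ} (X : Matrix (Fin m) (Fin n) ℂ) : ℝ :=
  ‖(LinearMap.toContinuousLinearMap (Matrix.toEuclideanLin X))‖

/-- Frobenius norm of a matrix. -/
noncomputable def frobNorm {m n : ℕ} (X : Matrix (Fin m) (Fin n) ℂ) : ℝ :=
  Real.sqrt (∑ i, ∑ j, ‖X i j‖ ^ 2)

/-- Singular values in descending order: `svalsDesc X k` is the (k+1)-st largest singular value. -/
noncomputable def svalsDesc {m n : ℕ} (X : Matrix (Fin m) (Fin n) ℂ) : Fin n → ℝ :=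
  fun k => ((fun i => Real.sqrt ((Matrix.isHermitian_conjTranspose_mul_self X).eigenvalues i)) ∘
    Tuple.sort (fun i => Real.sqrt ((Matrix.isHermitian_conjTranspose_mul_self X).eigenvalues i))) k.rev


/-- dot product and inner product of EuclideanSpace agree -/
lemma dot_eq_inner {a : ℕ} (p q : Fin a → ℂ) :
    star p ⬝ᵥ q = (inner ℂ ((WithLp.equiv 2 (Fin a → ℂ)).symm p)
      ((WithLp.equiv 2 (Fin a → ℂ)).symm q) : ℂ) := by
  simp [dotProduct, PiLp.inner_apply, RCLike.inner_apply, mul_comm]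

lemma norm_euclid {a : ℕ} (p : Fin a → ℂ) :
    ‖(WithLp.equiv 2 (Fin a → ℂ)).symm p‖ = Real.sqrt (∑ j, ‖p j‖ ^ 2) := by
  rw [EuclideanSpace.norm_eq]
  simp

lemma cs_coords {a : ℕ} (p q : Fin a → ℂ) :
    ‖star p ⬝ᵥ q‖ ≤ Real.sqrt (∑ j, ‖p j‖ ^ 2) * Real.sqrt (∑ j, ‖q j‖ ^ 2) := by
  rw [dot_eq_inner, ← norm_euclid, ← norm_euclid]
  exact norm_inner_le_norm _ _

lemma bessel_coords {ι : Type*} [Fintype ι] [DecidableEq ι] {a : ℕ} (u : ι → (Fin a → ℂ))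
    (h : ∀ i j, star (u i) ⬝ᵥ u j = if i = j then 1 else 0) (x : Fin a → ℂ) :
    ∑ i, ‖star (u i) ⬝ᵥ x‖ ^ 2 ≤ ∑ j, ‖x j‖ ^ 2 := by
  classical
  have horth : Orthonormal ℂ (fun i => (WithLp.equiv 2 (Fin a → ℂ)).symm (u i)) := by
    rw [orthonormal_iff_ite]
    intro i j
    rw [← dot_eq_inner]
    exact h i j
  have := horth.sum_inner_products_le (s := Finset.univ)
    ((WithLp.equiv 2 (Fin a → ℂ)).symm x)
  calc ∑ i, ‖star (u i) ⬝ᵥ x‖ ^ 2 = ∑ i, ‖(inner ℂ ((WithLp.equiv 2 (Fin a → ℂ)).symm (u i))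
        ((WithLp.equiv 2 (Fin a → ℂ)).symm x) : ℂ)‖ ^ 2 := by
        simp_rw [dot_eq_inner]
    _ ≤ ‖(WithLp.equiv 2 (Fin a → ℂ)).symm x‖ ^ 2 := this
    _ = ∑ j, ‖x j‖ ^ 2 := by
        rw [norm_euclid, Real.sq_sqrt]
        positivity

variable {m n : ℕ} (X : Matrix (Fin m) (Fin n) ℂ)

noncomputable def ev : Fin n → ℝ := (isHermitian_conjTranspose_mul_self X).eigenvalues
noncomputable def evec : Fin n → Fin n → ℂ :=
  fun i => ⇑((isHermitian_conjTranspose_mul_self X).eigenvectorBasis i)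
noncomputable def wv : Fin n → Fin m → ℂ := fun i => X *ᵥ evec X i

lemma ev_nonneg (i : Fin n) : 0 ≤ ev X i :=
  Matrix.eigenvalues_conjTranspose_mul_self_nonneg X i

lemma orth_v (i j : Fin n) : star (evec X i) ⬝ᵥ evec X j = if i = j then 1 else 0 := by
  have h := (isHermitian_conjTranspose_mul_self X).eigenvectorBasis.orthonormal
  rw [orthonormal_iff_ite] at h
  have := h i j
  rw [PiLp.inner_apply] at this
  simpa [dotProduct, RCLike.inner_apply, evec, mul_comm] using this

lemma eig_eq (i : Fin n) : (Xᴴ * X) *ᵥ evec X i = (ev X i : ℂ) • evec X i := by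
  have h := (isHermitian_conjTranspose_mul_self X).mulVec_eigenvectorBasis i
  rw [show ((isHermitian_conjTranspose_mul_self X).eigenvalues i • ⇑((isHermitian_conjTranspose_mul_self X).eigenvectorBasis i)) = ((isHermitian_conjTranspose_mul_self X).eigenvalues i : ℂ) • ⇑((isHermitian_conjTranspose_mul_self X).eigenvectorBasis i) from ?_] at h
  · exact h
  · ext k; simp [Pi.smul_apply, Complex.real_smul]

lemma w_dot (i j : Fin n) : star (wv X i) ⬝ᵥ wv X j = if i = j then (ev X i : ℂ) else 0 := by
  unfold wv
  rw [star_mulVec, ← dotProduct_mulVec, mulVec_mulVec, eig_eq X j, dotProduct_smul, orth_v X i j]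
  by_cases h : i = j <;> simp [h, smul_eq_mul]

lemma w_norm_sq (i : Fin n) : ∑ j, ‖wv X i j‖ ^ 2 = ev X i := by
  have h := w_dot X i i
  rw [if_pos rfl] at h
  have := congrArg Complex.re h
  rw [Complex.ofReal_re] at this
  rw [← this]
  simp only [dotProduct, Complex.re_sum, Pi.star_apply, RCLike.star_def, Complex.mul_re,
    Complex.conj_re, Complex.conj_im, Complex.sq_norm, Complex.normSq_apply]
  apply Finset.sum_congr rfl
  intro x _
  ring

lemma w_zero {i : Fin n} (h : ev X i = 0) : wv X i = 0 := by
  have h2 := w_norm_sq X i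
  rw [h] at h2
  funext j
  have : ‖wv X i j‖ ^ 2 = 0 := by
    have hle : ‖wv X i j‖ ^ 2 ≤ 0 := h2 ▸ Finset.single_le_sum
      (f := fun j => ‖wv X i j‖ ^ 2) (fun j _ => by positivity) (Finset.mem_univ j)
    nlinarith [sq_nonneg ‖wv X i j‖]
  simpa using pow_eq_zero_iff (n := 2) (by norm_num) |>.mp this

lemma complete_v (k l : Fin n) : ∑ i, evec X i k * star (evec X i l) = if k = l then 1 else 0 := by
  have hU := Matrix.mem_unitaryGroup_iff.mp
    ((isHermitian_conjTranspose_mul_self X).eigenvectorUnitary).2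
  have := congrFun (congrFun (congrArg (fun M => M) hU) k) l
  have h2 : (((isHermitian_conjTranspose_mul_self X).eigenvectorUnitary : Matrix (Fin n) (Fin n) ℂ) *
      star ((isHermitian_conjTranspose_mul_self X).eigenvectorUnitary : Matrix (Fin n) (Fin n) ℂ)) k l
      = (1 : Matrix (Fin n) (Fin n) ℂ) k l := by rw [hU]
  simpa [Matrix.mul_apply, Matrix.star_apply, Matrix.one_apply, evec] using h2

lemma decomp (j : Fin m) (k : Fin n) : X j k = ∑ i, wv X i j * star (evec X i k) := by
  unfold wv
  simp only [mulVec, dotProduct]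
  simp_rw [Finset.sum_mul, mul_assoc]
  rw [Finset.sum_comm]
  have : ∀ l : Fin n, ∑ i, X j l * (evec X i l * star (evec X i k))
      = X j l * (if l = k then 1 else 0) := by
    intro l
    rw [← Finset.mul_sum, complete_v X l k]
  simp_rw [this]
  simp

lemma frob_sq {a b : ℕ} (M : Matrix (Fin a) (Fin b) ℂ) :
    frobNorm M ^ 2 = ∑ i, ∑ j, ‖M i j‖ ^ 2 := by
  rw [frobNorm, Real.sq_sqrt]
  positivity

lemma frobSqGen {a : ℕ} {ι : Type*} [Fintype ι] (M : Matrix (Fin a) ι ℂ) :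
    ∑ j, ∑ i, ‖M j i‖ ^ 2 = ∑ j, Complex.re ((M * Mᴴ) j j) := by
  apply Finset.sum_congr rfl
  intro j _
  simp only [Matrix.mul_apply, Matrix.conjTranspose_apply, Complex.re_sum, RCLike.star_def,
    Complex.mul_re, Complex.conj_re, Complex.conj_im, Complex.sq_norm,
    Complex.normSq_apply]
  apply Finset.sum_congr rfl
  intro i _
  ring

lemma nuclear_eq {m n : ℕ} (X : Matrix (Fin m) (Fin n) ℂ) :
    nuclearNorm X = ∑ i, Real.sqrt (ev X i) := rfl

lemma v_norm_sq {m n : ℕ} (X : Matrix (Fin m) (Fin n) ℂ) (i : Fin n) :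
    ∑ k, ‖evec X i k‖ ^ 2 = 1 := by
  have h := orth_v X i i
  rw [if_pos rfl] at h
  have := congrArg Complex.re h
  rw [Complex.one_re] at this
  rw [← this]
  simp only [dotProduct, Complex.re_sum, Pi.star_apply, RCLike.star_def, Complex.mul_re,
    Complex.conj_re, Complex.conj_im, Complex.sq_norm, Complex.normSq_apply]
  apply Finset.sum_congr rfl
  intro x _
  ring

lemma sum_subtype_ev {M : Type*} [AddCommMonoid M] {n' : ℕ} (lam : Fin n' → ℝ) (f : Fin n' → M)
    (hf : ∀ i, lam i = 0 → f i = 0) :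
    ∑ i : {i // lam i ≠ 0}, f i.1 = ∑ i, f i := by
  classical
  rw [Finset.sum_subtype (Finset.univ.filter (fun i => lam i ≠ 0))
    (by simp) f |>.symm]
  exact Finset.sum_filter_of_ne (fun x _ hx h0 => hx (hf x h0))

lemma sum_subtype_le {n' : ℕ} (lam : Fin n' → ℝ) (g : Fin n' → ℝ) (hg : ∀ i, 0 ≤ g i) :
    ∑ i : {i // lam i ≠ 0}, g i.1 ≤ ∑ i, g i := by
  classical
  rw [Finset.sum_subtype (Finset.univ.filter (fun i => lam i ≠ 0)) (by simp) g |>.symm]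
  exact Finset.sum_le_sum_of_subset_of_nonneg (Finset.filter_subset _ _)
    (fun i _ _ => hg i)

section Membership
variable {m n r : ℕ} (X : Matrix (Fin m) (Fin n) ℂ)

lemma card_S_le (hr : X.rank ≤ r) : Fintype.card {i // ev X i ≠ 0} ≤ r := by
  have h := (isHermitian_conjTranspose_mul_self X).rank_eq_card_non_zero_eigs
  rw [Matrix.rank_conjTranspose_mul_self] at h
  exact h ▸ hr

lemma mem_part (hr : X.rank ≤ r) : ∃ (L : Matrix (Fin m) (Fin r) ℂ) (R : Matrix (Fin n) (Fin r) ℂ),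
    X = L * Rᴴ ∧ nuclearNorm X = (frobNorm L ^ 2 + frobNorm R ^ 2) / 2 := by
  classical
  obtain ⟨e⟩ : Nonempty ({i // ev X i ≠ 0} ↪ Fin r) :=
    Function.Embedding.nonempty_of_card_le (by simpa using card_S_le X hr)
  set S := {i // ev X i ≠ 0}
  set β : Fin n → ℝ := fun i => Real.sqrt (Real.sqrt (ev X i)) with hβ
  have hβpos : ∀ i : S, 0 < β i.1 := fun i =>
    Real.sqrt_pos.mpr (Real.sqrt_pos.mpr (lt_of_le_of_ne (ev_nonneg X i.1) (Ne.symm i.2)))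
  set L₀ : Matrix (Fin m) S ℂ := fun j i => ((β i.1)⁻¹ : ℝ) * wv X i.1 j with hL₀
  set R₀ : Matrix (Fin n) S ℂ := fun k i => (β i.1 : ℝ) * evec X i.1 k with hR₀
  set P : Matrix S (Fin r) ℂ := fun i c => if e i = c then 1 else 0 with hP
  have hPP : P * Pᴴ = 1 := by
    ext i i'
    simp only [Matrix.mul_apply, Matrix.conjTranspose_apply]
    simp only [Matrix.mul_apply, Matrix.conjTranspose_apply, hP]
    by_cases h : i = i'
    · subst h
      simp [Finset.sum_ite_eq' Finset.univ (e i), apply_ite (star : ℂ → ℂ)]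
    · have : e i ≠ e i' := fun hc => h (e.injective hc)
      rw [Matrix.one_apply_ne h]
      apply Finset.sum_eq_zero
      intro c _
      by_cases hc : e i = c
      · have h2 : e i' ≠ c := fun hcc => this (hc.trans hcc.symm)
        simp [hc, h2]
      · simp [hc]
  have hβconj : ∀ i : S, (starRingEnd ℂ) ((β i.1 : ℝ) : ℂ) = ((β i.1 : ℝ) : ℂ) :=
    fun i => Complex.conj_ofReal _
  have hβmul : ∀ i : S, (((β i.1)⁻¹ : ℝ) : ℂ) * ((β i.1 : ℝ) : ℂ) = 1 := by
    intro i
    rw [← Complex.ofReal_mul, inv_mul_cancel₀ (ne_of_gt (hβpos i))]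
    simp
  have hLL : (L₀ * P) * (L₀ * P)ᴴ = L₀ * L₀ᴴ := by
    rw [Matrix.conjTranspose_mul, Matrix.mul_assoc L₀ P _, ← Matrix.mul_assoc P Pᴴ _, hPP,
      Matrix.one_mul]
  have hRR : (R₀ * P) * (R₀ * P)ᴴ = R₀ * R₀ᴴ := by
    rw [Matrix.conjTranspose_mul, Matrix.mul_assoc R₀ P _, ← Matrix.mul_assoc P Pᴴ _, hPP,
      Matrix.one_mul]
  have hβsq : ∀ i : S, (β i.1) ^ 2 = Real.sqrt (ev X i.1) :=
    fun i => Real.sq_sqrt (Real.sqrt_nonneg _)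
  have hsqrt_ne : ∀ i : S, Real.sqrt (ev X i.1) ≠ 0 := fun i => by
    have := hβpos i
    rw [hβ] at this
    exact ne_of_gt (Real.sqrt_pos.mp (by nlinarith [hβsq i]))
  have hfrobL : frobNorm (L₀ * P) ^ 2 = ∑ i : S, Real.sqrt (ev X i.1) := by
    rw [frob_sq, frobSqGen, hLL, ← frobSqGen, Finset.sum_comm]
    apply Finset.sum_congr rfl
    intro i _
    have : ∀ j, ‖L₀ j i‖ ^ 2 = ((β i.1)⁻¹) ^ 2 * ‖wv X i.1 j‖ ^ 2 := by
      intro j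
      rw [hL₀]
      simp only [norm_mul, Complex.norm_real, Real.norm_eq_abs, mul_pow]
      rw [abs_of_pos (inv_pos.mpr (hβpos i))]
    simp_rw [this]
    rw [← Finset.mul_sum, w_norm_sq]
    rw [inv_pow, hβsq i, inv_mul_eq_iff_eq_mul₀ (hsqrt_ne i)]
    exact (Real.mul_self_sqrt (ev_nonneg X i.1)).symm
  have hfrobR : frobNorm (R₀ * P) ^ 2 = ∑ i : S, Real.sqrt (ev X i.1) := by
    rw [frob_sq, frobSqGen, hRR, ← frobSqGen, Finset.sum_comm]
    apply Finset.sum_congr rfl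
    intro i _
    have : ∀ k, ‖R₀ k i‖ ^ 2 = (β i.1) ^ 2 * ‖evec X i.1 k‖ ^ 2 := by
      intro k
      rw [hR₀]
      simp only [norm_mul, Complex.norm_real, Real.norm_eq_abs, mul_pow]
      rw [abs_of_pos (hβpos i)]
    simp_rw [this]
    rw [← Finset.mul_sum, v_norm_sq, mul_one, hβsq i]
  have hnuc : nuclearNorm X = ∑ i : S, Real.sqrt (ev X i.1) := by
    rw [nuclear_eq]
    exact (sum_subtype_ev (ev X) _ (fun i h0 => by rw [h0, Real.sqrt_zero])).symm
  refine ⟨L₀ * P, R₀ * P, ?_, ?_⟩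
  · rw [Matrix.conjTranspose_mul, ← Matrix.mul_assoc, Matrix.mul_assoc L₀ P _, hPP,
      Matrix.mul_one]
    ext j k
    rw [Matrix.mul_apply, decomp X j k]
    rw [← sum_subtype_ev (M := ℂ) (ev X) (fun i => wv X i j * star (evec X i k))
      (fun i h0 => by simp [w_zero X h0])]
    apply Finset.sum_congr rfl
    intro i _
    rw [Matrix.conjTranspose_apply, hL₀, hR₀]
    simp only [Matrix.conjTranspose_apply, RCLike.star_def, _root_.map_mul, hβconj i]
    linear_combination (-(wv X i.1 j * (starRingEnd ℂ) (evec X i.1 k))) * hβmul i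
  · rw [hfrobL, hfrobR, hnuc]
    ring

end Membership

lemma dot_star_comm {a : ℕ} (p q : Fin a → ℂ) :
    star p ⬝ᵥ q = star (star q ⬝ᵥ p) := by
  simp [dotProduct, Finset.sum_comm, map_sum, mul_comm]

lemma lower_bound {m n r : ℕ} (X : Matrix (Fin m) (Fin n) ℂ)
    (L : Matrix (Fin m) (Fin r) ℂ) (R : Matrix (Fin n) (Fin r) ℂ) (hX : X = L * Rᴴ) :
    nuclearNorm X ≤ (frobNorm L ^ 2 + frobNorm R ^ 2) / 2 := by
  classical
  set q : Fin n → Fin r → ℂ := fun i => Rᴴ *ᵥ evec X i with hq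
  set p : Fin n → Fin r → ℂ := fun i => Lᴴ *ᵥ wv X i with hp
  set P : Fin n → ℝ := fun i => ∑ c, ‖p i c‖ ^ 2 with hP
  set Q : Fin n → ℝ := fun i => ∑ c, ‖q i c‖ ^ 2 with hQ
  have hpq : ∀ i, (ev X i : ℂ) = star (p i) ⬝ᵥ q i := by
    intro i
    have h1 := w_dot X i i
    rw [if_pos rfl] at h1
    have hw : wv X i = L *ᵥ q i := by
      rw [hq]
      show wv X i = L *ᵥ (Rᴴ *ᵥ evec X i)
      rw [Matrix.mulVec_mulVec, ← hX]
      rfl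
    have h3 : star (p i) ⬝ᵥ q i = star (wv X i) ⬝ᵥ wv X i := by
      rw [hp]
      show star (Lᴴ *ᵥ wv X i) ⬝ᵥ q i = _
      rw [star_mulVec, Matrix.conjTranspose_conjTranspose, ← Matrix.dotProduct_mulVec, ← hw]
    exact (h3.trans h1).symm
  -- Cauchy-Schwarz per index
  have hCS : ∀ i, ev X i ≤ Real.sqrt (P i) * Real.sqrt (Q i) := by
    intro i
    have h2 : ‖((ev X i : ℝ) : ℂ)‖ = ev X i := by
      rw [Complex.norm_real, Real.norm_eq_abs, abs_of_nonneg (ev_nonneg X i)]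
    calc ev X i = ‖((ev X i : ℝ) : ℂ)‖ := h2.symm
      _ = ‖star (p i) ⬝ᵥ q i‖ := by rw [hpq i]
      _ ≤ Real.sqrt (P i) * Real.sqrt (Q i) := cs_coords _ _
  have hPnn : ∀ i, 0 ≤ P i := fun i => by positivity
  have hQnn : ∀ i, 0 ≤ Q i := fun i => by positivity
  -- per-index key inequality on the nonzero eigenvalues
  have key1 : ∀ i : {i // ev X i ≠ 0},
      Real.sqrt (ev X i.1) ≤ ((ev X i.1)⁻¹ * P i.1 + Q i.1) / 2 := by
    rintro ⟨i, hi⟩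
    have hev : 0 < ev X i := lt_of_le_of_ne (ev_nonneg X i) (Ne.symm hi)
    rw [le_div_iff₀ (by norm_num : (0:ℝ) < 2), ← mul_le_mul_iff_of_pos_right hev]
    have hexp : ((ev X i)⁻¹ * P i + Q i) * ev X i = P i + Q i * ev X i := by
      field_simp
    rw [hexp]
    nlinarith [Real.sq_sqrt hev.le, Real.sqrt_nonneg (ev X i), Real.sq_sqrt (hPnn i),
      Real.sq_sqrt (hQnn i), Real.sqrt_nonneg (P i), Real.sqrt_nonneg (Q i),
      sq_nonneg (Real.sqrt (P i) - Real.sqrt (Q i) * Real.sqrt (ev X i)), hCS i,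
      mul_nonneg (Real.sqrt_nonneg (Q i)) (Real.sqrt_nonneg (ev X i)),
      mul_le_mul_of_nonneg_right (hCS i) (mul_nonneg (by norm_num : (0:ℝ) ≤ 2)
        (Real.sqrt_nonneg (ev X i)))]
  -- Bessel for R:  ∑ i, Q i ≤ frobNorm R ^ 2
  have hbesselR : ∑ i, Q i ≤ frobNorm R ^ 2 := by
    rw [frob_sq]
    have h0 : ∑ i, Q i = ∑ c, ∑ i, ‖q i c‖ ^ 2 := Finset.sum_comm
    rw [h0, show (∑ k, ∑ c, ‖R k c‖ ^ 2) = ∑ c, ∑ k, ‖R k c‖ ^ 2 from Finset.sum_comm]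
    apply Finset.sum_le_sum
    intro c _
    have hb := bessel_coords (evec X) (orth_v X) (fun k => R k c)
    calc ∑ i, ‖q i c‖ ^ 2 = ∑ i, ‖star (evec X i) ⬝ᵥ (fun k => R k c)‖ ^ 2 := by
          apply Finset.sum_congr rfl
          intro i _
          congr 1
          have e1 : q i c = star (fun k => R k c) ⬝ᵥ evec X i := by
            rw [hq]
            simp [Matrix.mulVec, dotProduct, Matrix.conjTranspose_apply]
          rw [e1, dot_star_comm, norm_star]
      _ ≤ ∑ k, ‖R k c‖ ^ 2 := hb
  -- Bessel for L with normalized w's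
  have hbesselL : ∑ i : {i // ev X i ≠ 0}, (ev X i.1)⁻¹ * P i.1 ≤ frobNorm L ^ 2 := by
    set u : {i // ev X i ≠ 0} → Fin m → ℂ :=
      fun i => ((Real.sqrt (ev X i.1) : ℝ) : ℂ)⁻¹ • wv X i.1 with hu
    have horth : ∀ i j, star (u i) ⬝ᵥ u j = if i = j then 1 else 0 := by
      intro i j
      rw [hu]
      simp only [star_smul, smul_dotProduct, dotProduct_smul, star_inv₀, RCLike.star_def,
        Complex.conj_ofReal, smul_eq_mul, w_dot X i.1 j.1]
      by_cases h : i = j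
      · subst h
        rw [if_pos rfl, if_pos rfl]
        have hev : 0 < ev X i.1 := lt_of_le_of_ne (ev_nonneg X i.1) (Ne.symm i.2)
        have : ((Real.sqrt (ev X i.1) : ℝ) : ℂ) * ((Real.sqrt (ev X i.1) : ℝ) : ℂ)
            = ((ev X i.1 : ℝ) : ℂ) := by
          rw [← Complex.ofReal_mul, Real.mul_self_sqrt hev.le]
        field_simp
        rw [← this, sq]
      · rw [if_neg h, if_neg (fun hc => h (Subtype.ext hc))]
        simp
    rw [frob_sq, Finset.sum_comm]
    have swap : ∑ i : {i // ev X i ≠ 0}, (ev X i.1)⁻¹ * P i.1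
        = ∑ c, ∑ i : {i // ev X i ≠ 0}, (ev X i.1)⁻¹ * ‖p i.1 c‖ ^ 2 := by
      rw [Finset.sum_comm]
      apply Finset.sum_congr rfl
      intro i _
      rw [hP, Finset.mul_sum]
    rw [swap]
    apply Finset.sum_le_sum
    intro c _
    have hb := bessel_coords u horth (fun j => L j c)
    calc ∑ i : {i // ev X i ≠ 0}, (ev X i.1)⁻¹ * ‖p i.1 c‖ ^ 2
        = ∑ i, ‖star (u i) ⬝ᵥ (fun j => L j c)‖ ^ 2 := by
          apply Finset.sum_congr rfl
          intro i _
          have hev : 0 < ev X i.1 := lt_of_le_of_ne (ev_nonneg X i.1) (Ne.symm i.2)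
          have h1 : star (u i) ⬝ᵥ (fun j => L j c)
              = ((Real.sqrt (ev X i.1) : ℝ) : ℂ)⁻¹ * (star (wv X i.1) ⬝ᵥ (fun j => L j c)) := by
            rw [hu]
            simp [star_smul, smul_dotProduct, smul_eq_mul, star_inv₀, Complex.conj_ofReal]
          have h2 : ‖star (wv X i.1) ⬝ᵥ (fun j => L j c)‖ = ‖p i.1 c‖ := by
            have e1 : p i.1 c = star (fun j => L j c) ⬝ᵥ wv X i.1 := by
              rw [hp]
              simp [Matrix.mulVec, dotProduct, Matrix.conjTranspose_apply]
            rw [e1, dot_star_comm, norm_star]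
          rw [h1, norm_mul, mul_pow, h2]
          congr 1
          rw [norm_inv, Complex.norm_real, Real.norm_eq_abs,
            abs_of_nonneg (Real.sqrt_nonneg _), inv_pow, Real.sq_sqrt hev.le]
      _ ≤ ∑ j, ‖L j c‖ ^ 2 := hb
  -- assembly
  have step1 : nuclearNorm X = ∑ i : {i // ev X i ≠ 0}, Real.sqrt (ev X i.1) := by
    rw [nuclear_eq]
    exact (sum_subtype_ev (ev X) _ (fun i h0 => by rw [h0, Real.sqrt_zero])).symm
  rw [step1]
  have step2 : ∑ i : {i // ev X i ≠ 0}, Real.sqrt (ev X i.1)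
      ≤ ∑ i : {i // ev X i ≠ 0}, ((ev X i.1)⁻¹ * P i.1 + Q i.1) / 2 :=
    Finset.sum_le_sum (fun i _ => key1 i)
  have step3 : ∑ i : {i // ev X i ≠ 0}, Q i.1 ≤ ∑ i, Q i :=
    sum_subtype_le (ev X) Q hQnn
  calc ∑ i : {i // ev X i ≠ 0}, Real.sqrt (ev X i.1)
      ≤ ∑ i : {i // ev X i ≠ 0}, ((ev X i.1)⁻¹ * P i.1 + Q i.1) / 2 := step2
    _ = ((∑ i : {i // ev X i ≠ 0}, (ev X i.1)⁻¹ * P i.1)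
        + ∑ i : {i // ev X i ≠ 0}, Q i.1) / 2 := by
        rw [← Finset.sum_add_distrib, Finset.sum_div]
    _ ≤ (frobNorm L ^ 2 + frobNorm R ^ 2) / 2 := by
        have := le_trans step3 hbesselR
        have := hbesselL
        linarith

theorem nuclearNorm_eq_min_factorization {m n r : ℕ}
    (X : Matrix (Fin m) (Fin n) ℂ) (hr : X.rank ≤ r) :
    IsLeast {c : ℝ | ∃ (L : Matrix (Fin m) (Fin r) ℂ) (R : Matrix (Fin n) (Fin r) ℂ),
        X = L * Rᴴ ∧ c = (frobNorm L ^ 2 + frobNorm R ^ 2) / 2}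
      (nuclearNorm X) := by
  constructor
  · obtain ⟨L, R, h1, h2⟩ := mem_part X hr
    exact ⟨L, R, h1, h2⟩
  · rintro c ⟨L, R, hXc, rfl⟩
    exact lower_bound X L R hXc
end

section
/- Let Q = w₁·U·Uᴴ + U⊥·U⊥ᴴ and W = w₂·V·Vᴴ + V⊥·V⊥ᴴ with 0 < w₁, w₂ ≤ 1. Then for any X ∈ ℂ^{m×n}, w₁·w₂·‖X‖_* ≤ ‖Q·X·W‖_* ≤ ‖X‖_*. -/
open Matrix
open scoped ComplexOrder

open scoped Matrix.Norms.L2Operator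

lemma opNorm_eq {m n : ℕ} (X : Matrix (Fin m) (Fin n) ℂ) : opNorm X = ‖X‖ := rfl

lemma star_dot_self {k : ℕ} (v : Fin k → ℂ) : star v ⬝ᵥ v = ((∑ i, ‖v i‖^2 : ℝ) : ℂ) := by
  simp [dotProduct, Pi.star_apply, Complex.star_def, Complex.conj_mul']

lemma col_sq_sum {k l : ℕ} (M : Matrix (Fin k) (Fin l) ℂ) (i : Fin l) :
    ((Mᴴ * M) i i) = ((∑ j, ‖M j i‖^2 : ℝ) : ℂ) := by
  simp [Matrix.mul_apply, Matrix.conjTranspose_apply, Complex.star_def, Complex.conj_mul']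

set_option maxHeartbeats 1000000 in
lemma re_trace_le {m n : ℕ} (Y Z : Matrix (Fin m) (Fin n) ℂ) :
    (Matrix.trace (Zᴴ * Y)).re ≤ ‖Z‖ * nuclearNorm Y := by
  classical
  set hH := Matrix.isHermitian_conjTranspose_mul_self Y with hHdef
  set V : Matrix (Fin n) (Fin n) ℂ := (hH.eigenvectorUnitary : Matrix (Fin n) (Fin n) ℂ) with hVdef
  have hVmem := hH.eigenvectorUnitary.2
  have hVV : Vᴴ * V = 1 := by
    simpa [Matrix.star_eq_conjTranspose] using (Matrix.mem_unitaryGroup_iff'.mp hVmem)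
  have hVV' : V * Vᴴ = 1 := by
    simpa [Matrix.star_eq_conjTranspose] using (Matrix.mem_unitaryGroup_iff.mp hVmem)
  have hdiag : Vᴴ * (Yᴴ * Y) * V = Matrix.diagonal (RCLike.ofReal ∘ hH.eigenvalues) := by
    simpa [Matrix.star_eq_conjTranspose, Unitary.conjStarAlgAut_star_apply] using
      hH.conjStarAlgAut_star_eigenvectorUnitary
  have htr : Matrix.trace (Zᴴ * Y) = Matrix.trace ((Z * V)ᴴ * (Y * V)) := by
    rw [Matrix.conjTranspose_mul, Matrix.mul_assoc, ← Matrix.mul_assoc Zᴴ Y V,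
      ← Matrix.mul_assoc Vᴴ (Zᴴ * Y) V, Matrix.trace_mul_cycle, ← Matrix.mul_assoc, hVV',
      Matrix.one_mul]
  have hb : ∀ i, ∑ j, ‖(Y * V) j i‖^2 = hH.eigenvalues i := by
    intro i
    have h1 : ((Y * V)ᴴ * (Y * V)) i i = ((hH.eigenvalues i : ℝ) : ℂ) := by
      rw [Matrix.conjTranspose_mul, Matrix.mul_assoc, ← Matrix.mul_assoc Yᴴ Y V,
        ← Matrix.mul_assoc Vᴴ _ _, hdiag]
      simp [Matrix.diagonal_apply_eq]
    rw [col_sq_sum] at h1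
    exact_mod_cast h1
  have ha : ∀ i, ∑ j, ‖V j i‖^2 = 1 := by
    intro i
    have h1 : (Vᴴ * V) i i = ((1:ℝ):ℂ) := by rw [hVV]; simp
    rw [col_sq_sum] at h1
    exact_mod_cast h1
  -- now bound the real part of the trace
  rw [htr]
  have hentry : ∀ i : Fin n, ((Z * V)ᴴ * (Y * V)) i i
      = (inner ℂ ((WithLp.equiv 2 (Fin m → ℂ)).symm (fun k => (Z * V) k i))
          ((WithLp.equiv 2 (Fin m → ℂ)).symm (fun k => (Y * V) k i)) : ℂ) := by
    intro i
    simp [Matrix.mul_apply, Matrix.conjTranspose_apply, PiLp.inner_apply, RCLike.inner_apply,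
      Complex.star_def]
    refine Finset.sum_congr rfl fun k _ => ?_
    have hc : (∑ x, (starRingEnd ℂ) (V x i) * (starRingEnd ℂ) (Z k x))
        = ∑ x, (starRingEnd ℂ) (Z k x) * (starRingEnd ℂ) (V x i) :=
      Finset.sum_congr rfl fun x _ => mul_comm _ _
    rw [hc, mul_comm]
  have hσ : ∀ i : Fin n, ‖(WithLp.equiv 2 (Fin m → ℂ)).symm (fun k => (Y * V) k i)‖
      = Real.sqrt (hH.eigenvalues i) := by
    intro i
    rw [EuclideanSpace.norm_eq]
    congr 1
    simpa using hb i
  have hZcol : ∀ i : Fin n, ‖(WithLp.equiv 2 (Fin m → ℂ)).symm (fun k => (Z * V) k i)‖ ≤ ‖Z‖ := by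
    intro i
    have hcol : (fun k => (Z * V) k i) = Z *ᵥ (fun j => V j i) := by
      ext k; simp [Matrix.mul_apply, Matrix.mulVec, dotProduct]
    rw [hcol]
    have := Z.l2_opNorm_mulVec ((WithLp.equiv 2 (Fin n → ℂ)).symm (fun j => V j i))
    have hn1 : ‖(WithLp.equiv 2 (Fin n → ℂ)).symm (fun j => V j i)‖ = 1 := by
      rw [EuclideanSpace.norm_eq]
      have : ∀ j, ‖(WithLp.equiv 2 (Fin n → ℂ)).symm (fun j => V j i) j‖^2 = ‖V j i‖^2 := fun _ => rfl
      simp only [this, ha i, Real.sqrt_one]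
    rw [hn1, mul_one] at this
    exact this
  rw [Matrix.trace]
  rw [Complex.re_sum]
  simp only [Matrix.diag_apply]
  have hre : ∀ i : Fin n, ((((Z * V)ᴴ * (Y * V)) i i)).re ≤ ‖Z‖ * Real.sqrt (hH.eigenvalues i) := by
    intro i
    refine (Complex.re_le_norm _).trans ?_
    rw [hentry i]
    refine (norm_inner_le_norm _ _).trans ?_
    rw [hσ i]
    exact mul_le_mul_of_nonneg_right (hZcol i) (Real.sqrt_nonneg _)
  calc ∑ i, ((((Z * V)ᴴ * (Y * V)) i i)).re ≤ ∑ i, ‖Z‖ * Real.sqrt (hH.eigenvalues i) :=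
        Finset.sum_le_sum (fun i _ => hre i)
    _ = ‖Z‖ * nuclearNorm Y := by rw [← Finset.mul_sum]; rfl

set_option maxHeartbeats 1000000 in
lemma opNorm_le_of_psd {k l : ℕ} (A : Matrix (Fin k) (Fin l) ℂ) (c : ℝ) (hc : 0 ≤ c)
    (h : (((c^2 : ℝ) : ℂ) • (1 : Matrix (Fin l) (Fin l) ℂ) - Aᴴ * A).PosSemidef) :
    ‖A‖ ≤ c := by
  rw [l2_opNorm_def]
  apply ContinuousLinearMap.opNorm_le_bound _ hc
  intro x
  set v : Fin l → ℂ := (WithLp.equiv 2 _) x with hv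
  have key : ∑ i, ‖(A *ᵥ v) i‖^2 ≤ c^2 * ∑ i, ‖v i‖^2 := by
    have h2 := h.dotProduct_mulVec_nonneg v
    rw [Matrix.sub_mulVec, dotProduct_sub, Matrix.smul_mulVec, Matrix.one_mulVec,
      dotProduct_smul, ← Matrix.mulVec_mulVec, Matrix.dotProduct_mulVec,
      ← Matrix.star_mulVec, star_dot_self v, star_dot_self (A *ᵥ v)] at h2
    rw [sub_nonneg] at h2
    have : ((∑ i, ‖(A *ᵥ v) i‖ ^ 2 : ℝ) : ℂ) ≤ ((c^2 * ∑ i, ‖v i‖ ^ 2 : ℝ) : ℂ) := by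
      calc ((∑ i, ‖(A *ᵥ v) i‖ ^ 2 : ℝ) : ℂ) ≤ ((c^2:ℝ):ℂ) • ((∑ i, ‖v i‖ ^ 2 : ℝ):ℂ) := h2
        _ = ((c^2 * ∑ i, ‖v i‖ ^ 2 : ℝ) : ℂ) := by push_cast [smul_eq_mul]; ring
    exact_mod_cast this
  have hnx : ‖x‖ = Real.sqrt (∑ i, ‖v i‖^2) := by
    rw [EuclideanSpace.norm_eq]; rfl
  have hAx : ‖((Matrix.toEuclideanLin ≪≫ₗ LinearMap.toContinuousLinearMap) A) x‖
      = Real.sqrt (∑ i, ‖(A *ᵥ v) i‖^2) := by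
    rw [EuclideanSpace.norm_eq]; rfl
  rw [hAx, hnx, ← Real.sqrt_sq hc, ← Real.sqrt_mul (sq_nonneg c)]
  exact Real.sqrt_le_sqrt key

lemma svd_package {m n : ℕ} (Y : Matrix (Fin m) (Fin n) ℂ) :
    ∃ (V : Matrix (Fin n) (Fin n) ℂ) (lam : Fin n → ℝ),
      Vᴴ * V = 1 ∧ V * Vᴴ = 1 ∧ Yᴴ * Y = V * Matrix.diagonal (fun i => ((lam i : ℝ) : ℂ)) * Vᴴ ∧
      (∀ i, 0 ≤ lam i) ∧ nuclearNorm Y = ∑ i, Real.sqrt (lam i) := by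
  classical
  set hH := Matrix.isHermitian_conjTranspose_mul_self Y with hHdef
  refine ⟨(hH.eigenvectorUnitary : Matrix (Fin n) (Fin n) ℂ), hH.eigenvalues, ?_, ?_, ?_, ?_, rfl⟩
  · simpa [Matrix.star_eq_conjTranspose] using
      (Matrix.mem_unitaryGroup_iff'.mp hH.eigenvectorUnitary.2)
  · simpa [Matrix.star_eq_conjTranspose] using
      (Matrix.mem_unitaryGroup_iff.mp hH.eigenvectorUnitary.2)
  · simpa [Matrix.star_eq_conjTranspose, Function.comp_def] using hH.spectral_theorem
  · exact (Matrix.posSemidef_conjTranspose_mul_self Y).eigenvalues_nonneg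

lemma key_alg {m n : ℕ} (Y : Matrix (Fin m) (Fin n) ℂ) (V D E : Matrix (Fin n) (Fin n) ℂ)
    (hVV : Vᴴ * V = 1) (hEH : Eᴴ = E) (hspec : Yᴴ * Y = V * D * Vᴴ) :
    (Y * (V * E * Vᴴ))ᴴ * (Y * (V * E * Vᴴ)) = V * (E * D * E) * Vᴴ ∧
    (Y * (V * E * Vᴴ))ᴴ * Y = V * (E * D) * Vᴴ := by
  have h1 : (Y * (V * E * Vᴴ))ᴴ = V * E * Vᴴ * Yᴴ := by
    rw [Matrix.conjTranspose_mul, Matrix.conjTranspose_mul, Matrix.conjTranspose_mul, hEH,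
      Matrix.conjTranspose_conjTranspose]
    simp only [Matrix.mul_assoc]
  have h2 : (Y * (V * E * Vᴴ))ᴴ * Y = V * (E * D) * Vᴴ := by
    rw [h1, Matrix.mul_assoc (V * E * Vᴴ) Yᴴ Y, hspec]
    simp only [Matrix.mul_assoc]
    rw [← Matrix.mul_assoc Vᴴ V, hVV, Matrix.one_mul]
  refine ⟨?_, h2⟩
  have h3 : (Y * (V * E * Vᴴ))ᴴ * (Y * (V * E * Vᴴ))
      = ((Y * (V * E * Vᴴ))ᴴ * Y) * (V * E * Vᴴ) := by simp only [Matrix.mul_assoc]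
  rw [h3, h2]
  simp only [Matrix.mul_assoc]
  rw [← Matrix.mul_assoc Vᴴ V, hVV, Matrix.one_mul]

set_option maxHeartbeats 1000000 in
lemma exists_dual {m n : ℕ} (Y : Matrix (Fin m) (Fin n) ℂ) :
    ∃ Z : Matrix (Fin m) (Fin n) ℂ, ‖Z‖ ≤ 1 ∧ (Matrix.trace (Zᴴ * Y)).re = nuclearNorm Y := by
  classical
  obtain ⟨V, lam, hVV, hVV', hspec, hlam0, hnuc⟩ := svd_package Y
  set e : Fin n → ℂ := fun i => (((Real.sqrt (lam i))⁻¹ : ℝ) : ℂ) with he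
  have hestar : star e = e := by
    funext i
    simp [he, Complex.star_def, map_inv₀, Complex.conj_ofReal]
  have hEH : (Matrix.diagonal e)ᴴ = Matrix.diagonal e := by
    rw [Matrix.diagonal_conjTranspose, hestar]
  obtain ⟨hZZ, hZY⟩ := key_alg Y V (Matrix.diagonal (fun i => ((lam i : ℝ) : ℂ)))
    (Matrix.diagonal e) hVV hEH hspec
  have hsqlam : ∀ i, (Real.sqrt (lam i))⁻¹ * lam i = Real.sqrt (lam i) := by
    intro i
    rcases eq_or_lt_of_le (hlam0 i) with h0 | hpos
    · simp [← h0]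
    · have hs : Real.sqrt (lam i) ≠ 0 := (Real.sqrt_pos.mpr hpos).ne'
      calc (Real.sqrt (lam i))⁻¹ * lam i
          = (Real.sqrt (lam i))⁻¹ * (Real.sqrt (lam i) * Real.sqrt (lam i)) := by
            rw [Real.mul_self_sqrt (hlam0 i)]
        _ = Real.sqrt (lam i) := by field_simp
  have hED : Matrix.diagonal e * Matrix.diagonal (fun i => ((lam i : ℝ) : ℂ))
      = Matrix.diagonal (fun i => ((Real.sqrt (lam i) : ℝ) : ℂ)) := by
    rw [Matrix.diagonal_mul_diagonal]
    refine congrArg Matrix.diagonal (funext fun i => ?_)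
    simp only [he]
    rw [← Complex.ofReal_mul, hsqlam i]
  refine ⟨Y * (V * Matrix.diagonal e * Vᴴ), ?_, ?_⟩
  · apply opNorm_le_of_psd _ 1 zero_le_one
    have hEDE : Matrix.diagonal e * Matrix.diagonal (fun i => ((lam i : ℝ) : ℂ))
        * Matrix.diagonal e
        = Matrix.diagonal (fun i => ((Real.sqrt (lam i) * (Real.sqrt (lam i))⁻¹ : ℝ) : ℂ)) := by
      rw [hED, Matrix.diagonal_mul_diagonal]
      refine congrArg Matrix.diagonal (funext fun i => ?_)
      rw [he]
      push_cast
      ring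
    have h1 : (((1:ℝ)^2 : ℝ) : ℂ) • (1 : Matrix (Fin n) (Fin n) ℂ)
        - (Y * (V * Matrix.diagonal e * Vᴴ))ᴴ * (Y * (V * Matrix.diagonal e * Vᴴ))
        = V * Matrix.diagonal (fun i => ((1 - Real.sqrt (lam i) * (Real.sqrt (lam i))⁻¹ : ℝ) : ℂ))
            * Vᴴ := by
      rw [hZZ, hEDE]
      have hone : (((1:ℝ)^2 : ℝ) : ℂ) • (1 : Matrix (Fin n) (Fin n) ℂ) = V * 1 * Vᴴ := by
        rw [Matrix.mul_one, hVV']; norm_num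
      rw [hone, ← Matrix.sub_mul, ← Matrix.mul_sub]
      have : (1 : Matrix (Fin n) (Fin n) ℂ)
          - Matrix.diagonal (fun i => ((Real.sqrt (lam i) * (Real.sqrt (lam i))⁻¹ : ℝ) : ℂ))
          = Matrix.diagonal (fun i => ((1 - Real.sqrt (lam i) * (Real.sqrt (lam i))⁻¹ : ℝ) : ℂ)) := by
        rw [← Matrix.diagonal_one, Matrix.diagonal_sub]
        refine congrArg Matrix.diagonal (funext fun i => ?_)
        push_cast
        ring
      rw [this, Matrix.mul_assoc]
    rw [h1]
    apply Matrix.PosSemidef.mul_mul_conjTranspose_same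
    refine Matrix.posSemidef_diagonal_iff.mpr fun i => ?_
    rw [← Complex.ofReal_zero, Complex.real_le_real]
    rcases eq_or_lt_of_le (hlam0 i) with h0 | hpos
    · simp [← h0]
    · rw [mul_inv_cancel₀ (Real.sqrt_pos.mpr hpos).ne']
      norm_num
  · rw [hZY, hED, Matrix.trace_mul_cycle, hVV, Matrix.one_mul,
      Matrix.trace_diagonal, Complex.re_sum, hnuc]
    simp

lemma nuclearNorm_nonneg {m n : ℕ} (X : Matrix (Fin m) (Fin n) ℂ) : 0 ≤ nuclearNorm X :=
  Finset.sum_nonneg fun i _ => Real.sqrt_nonneg _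

lemma nuclearNorm_mul_mul_le {m n : ℕ} (A : Matrix (Fin m) (Fin m) ℂ)
    (B : Matrix (Fin n) (Fin n) ℂ) (X : Matrix (Fin m) (Fin n) ℂ) :
    nuclearNorm (A * X * B) ≤ ‖A‖ * ‖B‖ * nuclearNorm X := by
  obtain ⟨Z, hZ1, hZ2⟩ := exists_dual (A * X * B)
  rw [← hZ2]
  -- rewrite trace: trace (Zᴴ * (A*X*B)) = trace ((Aᴴ*Z*Bᴴ)ᴴ * X)
  have htr2 : Matrix.trace (Zᴴ * (A * X * B)) = Matrix.trace ((Aᴴ * Z * Bᴴ)ᴴ * X) := by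
    have h1 : (Aᴴ * Z * Bᴴ)ᴴ = B * Zᴴ * A := by
      simp only [Matrix.conjTranspose_mul, Matrix.conjTranspose_conjTranspose, Matrix.mul_assoc]
    rw [h1]
    have h2 : Zᴴ * (A * X * B) = (Zᴴ * A * X) * B := by simp only [Matrix.mul_assoc]
    have h3 : B * Zᴴ * A * X = B * (Zᴴ * A * X) := by simp only [Matrix.mul_assoc]
    rw [h2, h3, Matrix.trace_mul_comm]
  rw [htr2]
  calc (Matrix.trace ((Aᴴ * Z * Bᴴ)ᴴ * X)).re ≤ ‖Aᴴ * Z * Bᴴ‖ * nuclearNorm X :=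
        re_trace_le X (Aᴴ * Z * Bᴴ)
    _ ≤ ‖A‖ * ‖B‖ * nuclearNorm X := by
        apply mul_le_mul_of_nonneg_right _ (nuclearNorm_nonneg X)
        calc ‖Aᴴ * Z * Bᴴ‖ ≤ ‖Aᴴ * Z‖ * ‖Bᴴ‖ := l2_opNorm_mul _ _
          _ ≤ ‖Aᴴ‖ * ‖Z‖ * ‖Bᴴ‖ :=
              mul_le_mul_of_nonneg_right (l2_opNorm_mul _ _) (norm_nonneg _)
          _ = ‖A‖ * ‖Z‖ * ‖B‖ := by rw [l2_opNorm_conjTranspose, l2_opNorm_conjTranspose]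
          _ ≤ ‖A‖ * 1 * ‖B‖ := by
              apply mul_le_mul_of_nonneg_right _ (norm_nonneg _)
              exact mul_le_mul_of_nonneg_left hZ1 (norm_nonneg _)
          _ = ‖A‖ * ‖B‖ := by ring

lemma psd_ofReal_smul {k : ℕ} (M : Matrix (Fin k) (Fin k) ℂ) (hM : M.PosSemidef) (r : ℝ)
    (hr : 0 ≤ r) : (((r : ℝ) : ℂ) • M).PosSemidef := by
  refine Matrix.PosSemidef.of_dotProduct_mulVec_nonneg ?_ ?_
  · show (((r : ℝ) : ℂ) • M)ᴴ = _
    rw [Matrix.conjTranspose_smul, Complex.star_def, Complex.conj_ofReal, hM.1.eq]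
  · intro x
    rw [Matrix.smul_mulVec, dotProduct_smul, smul_eq_mul]
    have h0 : (0:ℂ) ≤ ((r:ℝ):ℂ) := by exact_mod_cast hr
    exact mul_nonneg h0 (hM.dotProduct_mulVec_nonneg x)

section pair
variable {k r₁ r₂ : ℕ} (U : Matrix (Fin k) (Fin r₁) ℂ) (Up : Matrix (Fin k) (Fin r₂) ℂ)

lemma pair_mul (hU : Uᴴ * U = 1) (hUp : Upᴴ * Up = 1) (hUUp : Uᴴ * Up = 0) (a b : ℂ) :
    ((a • (U * Uᴴ) + Up * Upᴴ) : Matrix (Fin k) (Fin k) ℂ) * (b • (U * Uᴴ) + Up * Upᴴ)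
      = (a * b) • (U * Uᴴ) + Up * Upᴴ := by
  have hUpU : Upᴴ * U = 0 := by
    have := congrArg Matrix.conjTranspose hUUp
    simpa [Matrix.conjTranspose_mul] using this
  have h1 : (U * Uᴴ) * (U * Uᴴ) = U * Uᴴ := by
    calc (U * Uᴴ) * (U * Uᴴ) = U * ((Uᴴ * U) * Uᴴ) := by simp only [Matrix.mul_assoc]
      _ = U * Uᴴ := by rw [hU, Matrix.one_mul]
  have h2 : (Up * Upᴴ) * (Up * Upᴴ) = Up * Upᴴ := by
    calc (Up * Upᴴ) * (Up * Upᴴ) = Up * ((Upᴴ * Up) * Upᴴ) := by simp only [Matrix.mul_assoc]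
      _ = Up * Upᴴ := by rw [hUp, Matrix.one_mul]
  have h12 : (U * Uᴴ) * (Up * Upᴴ) = 0 := by
    calc (U * Uᴴ) * (Up * Upᴴ) = U * ((Uᴴ * Up) * Upᴴ) := by simp only [Matrix.mul_assoc]
      _ = 0 := by rw [hUUp, Matrix.zero_mul, Matrix.mul_zero]
  have h21 : (Up * Upᴴ) * (U * Uᴴ) = 0 := by
    calc (Up * Upᴴ) * (U * Uᴴ) = Up * ((Upᴴ * U) * Uᴴ) := by simp only [Matrix.mul_assoc]
      _ = 0 := by rw [hUpU, Matrix.zero_mul, Matrix.mul_zero]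
  rw [Matrix.add_mul, Matrix.mul_add, Matrix.mul_add]
  rw [Matrix.smul_mul, Matrix.smul_mul, Matrix.mul_smul, Matrix.mul_smul, h1, h2, h12, h21,
    smul_smul]
  simp

lemma pair_herm (w : ℝ) :
    (((w:ℂ) • (U * Uᴴ) + Up * Upᴴ) : Matrix (Fin k) (Fin k) ℂ)ᴴ
      = (w:ℂ) • (U * Uᴴ) + Up * Upᴴ := by
  simp [Matrix.conjTranspose_add, Matrix.conjTranspose_smul, Matrix.conjTranspose_mul,
    Matrix.conjTranspose_conjTranspose, Complex.star_def, Complex.conj_ofReal]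

lemma pair_psd_diff (hcomp : U * Uᴴ + Up * Upᴴ = 1) (c d : ℂ) :
    d • (1 : Matrix (Fin k) (Fin k) ℂ) - (c • (U * Uᴴ) + Up * Upᴴ)
      = (d - c) • (U * Uᴴ) + (d - 1) • (Up * Upᴴ) := by
  rw [← hcomp]
  module

lemma pair_opNorm_le (hU : Uᴴ * U = 1) (hUp : Upᴴ * Up = 1) (hUUp : Uᴴ * Up = 0)
    (hcomp : U * Uᴴ + Up * Upᴴ = 1) (w c : ℝ) (hc : 0 ≤ c) (h1 : w * w ≤ c^2) (h2 : 1 ≤ c^2) :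
    ‖(((w:ℂ) • (U * Uᴴ) + Up * Upᴴ) : Matrix (Fin k) (Fin k) ℂ)‖ ≤ c := by
  apply opNorm_le_of_psd _ c hc
  rw [pair_herm, pair_mul U Up hU hUp hUUp, pair_psd_diff U Up hcomp]
  have e1 : ((c^2 : ℝ) : ℂ) - (w:ℂ) * (w:ℂ) = ((c^2 - w * w : ℝ) : ℂ) := by push_cast; ring
  have e2 : ((c^2 : ℝ) : ℂ) - 1 = ((c^2 - 1 : ℝ) : ℂ) := by push_cast; ring
  rw [e1, e2]
  exact Matrix.PosSemidef.add
    (psd_ofReal_smul _ (Matrix.posSemidef_self_mul_conjTranspose U) _ (by linarith))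
    (psd_ofReal_smul _ (Matrix.posSemidef_self_mul_conjTranspose Up) _ (by linarith))

end pair


set_option maxHeartbeats 1000000 in
theorem weighted_nuclearNorm_bounds {m n r₁ r₂ : ℕ}
    (w₁ w₂ : ℝ) (hw₁0 : 0 < w₁) (hw₁1 : w₁ ≤ 1) (hw₂0 : 0 < w₂) (hw₂1 : w₂ ≤ 1)
    (U : Matrix (Fin m) (Fin r₁) ℂ) (Up : Matrix (Fin m) (Fin (m - r₁)) ℂ)
    (V : Matrix (Fin n) (Fin r₂) ℂ) (Vp : Matrix (Fin n) (Fin (n - r₂)) ℂ)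
    (hU : Uᴴ * U = 1) (hUp : Upᴴ * Up = 1) (hUUp : Uᴴ * Up = 0)
    (hUcomp : U * Uᴴ + Up * Upᴴ = 1)
    (hV : Vᴴ * V = 1) (hVp : Vpᴴ * Vp = 1) (hVVp : Vᴴ * Vp = 0)
    (hVcomp : V * Vᴴ + Vp * Vpᴴ = 1)
    (Q : Matrix (Fin m) (Fin m) ℂ) (hQdef : Q = (w₁ : ℂ) • (U * Uᴴ) + Up * Upᴴ)
    (W : Matrix (Fin n) (Fin n) ℂ) (hWdef : W = (w₂ : ℂ) • (V * Vᴴ) + Vp * Vpᴴ)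
    (X : Matrix (Fin m) (Fin n) ℂ) :
    w₁ * w₂ * nuclearNorm X ≤ nuclearNorm (Q * X * W) ∧
    nuclearNorm (Q * X * W) ≤ nuclearNorm X := by
  have hQn : ‖Q‖ ≤ 1 := by
    rw [hQdef]
    exact pair_opNorm_le U Up hU hUp hUUp hUcomp w₁ 1 zero_le_one
      (by nlinarith) (by norm_num)
  have hWn : ‖W‖ ≤ 1 := by
    rw [hWdef]
    exact pair_opNorm_le V Vp hV hVp hVVp hVcomp w₂ 1 zero_le_one
      (by nlinarith) (by norm_num)
  set Q' : Matrix (Fin m) (Fin m) ℂ := ((w₁⁻¹ : ℝ) : ℂ) • (U * Uᴴ) + Up * Upᴴ with hQ'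
  set W' : Matrix (Fin n) (Fin n) ℂ := ((w₂⁻¹ : ℝ) : ℂ) • (V * Vᴴ) + Vp * Vpᴴ with hW'
  have hQ'n : ‖Q'‖ ≤ w₁⁻¹ := by
    rw [hQ']
    refine pair_opNorm_le U Up hU hUp hUUp hUcomp w₁⁻¹ w₁⁻¹ (by positivity) (by nlinarith) ?_
    have h1 : 1 ≤ w₁⁻¹ := by
      rw [le_inv_comm₀] <;> simp [hw₁0, hw₁1]
    nlinarith
  have hW'n : ‖W'‖ ≤ w₂⁻¹ := by
    rw [hW']
    refine pair_opNorm_le V Vp hV hVp hVVp hVcomp w₂⁻¹ w₂⁻¹ (by positivity) (by nlinarith) ?_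
    have h1 : 1 ≤ w₂⁻¹ := by
      rw [le_inv_comm₀] <;> simp [hw₂0, hw₂1]
    nlinarith
  have hQ'Q : Q' * Q = 1 := by
    rw [hQ', hQdef, pair_mul U Up hU hUp hUUp]
    have : ((w₁⁻¹ : ℝ) : ℂ) * (w₁ : ℂ) = 1 := by
      rw [← Complex.ofReal_mul, inv_mul_cancel₀ hw₁0.ne']
      norm_num
    rw [this, one_smul, hUcomp]
  have hWW' : W * W' = 1 := by
    rw [hW', hWdef, pair_mul V Vp hV hVp hVVp]
    have : (w₂ : ℂ) * ((w₂⁻¹ : ℝ) : ℂ) = 1 := by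
      rw [← Complex.ofReal_mul, mul_inv_cancel₀ hw₂0.ne']
      norm_num
    rw [this, one_smul, hVcomp]
  have hXrec : X = Q' * (Q * X * W) * W' := by
    calc X = (Q' * Q) * X * (W * W') := by rw [hQ'Q, hWW', Matrix.one_mul, Matrix.mul_one]
      _ = Q' * (Q * X * W) * W' := by simp only [Matrix.mul_assoc]
  constructor
  · -- lower bound
    have h1 : nuclearNorm X ≤ ‖Q'‖ * ‖W'‖ * nuclearNorm (Q * X * W) := by
      conv_lhs => rw [hXrec]
      exact nuclearNorm_mul_mul_le Q' W' (Q * X * W)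
    have h2 : ‖Q'‖ * ‖W'‖ * nuclearNorm (Q * X * W) ≤ w₁⁻¹ * w₂⁻¹ * nuclearNorm (Q * X * W) := by
      apply mul_le_mul_of_nonneg_right _ (nuclearNorm_nonneg _)
      exact mul_le_mul hQ'n hW'n (norm_nonneg _) (by positivity)
    have h3 : nuclearNorm X ≤ w₁⁻¹ * w₂⁻¹ * nuclearNorm (Q * X * W) := h1.trans h2
    calc w₁ * w₂ * nuclearNorm X ≤ w₁ * w₂ * (w₁⁻¹ * w₂⁻¹ * nuclearNorm (Q * X * W)) :=
          mul_le_mul_of_nonneg_left h3 (by positivity)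
      _ = nuclearNorm (Q * X * W) := by
          field_simp
  · -- upper bound
    have h1 : nuclearNorm (Q * X * W) ≤ ‖Q‖ * ‖W‖ * nuclearNorm X :=
      nuclearNorm_mul_mul_le Q W X
    have h2 : ‖Q‖ * ‖W‖ * nuclearNorm X ≤ 1 * 1 * nuclearNorm X := by
      apply mul_le_mul_of_nonneg_right _ (nuclearNorm_nonneg _)
      exact mul_le_mul hQn hWn (norm_nonneg _) zero_le_one
    have := h1.trans h2
    simpa using this
end
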